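/- Let Λ ∈ R* with generalized decomposition Λ = Σᵢ₌₁^d 𝟙_{ζᵢ} ∘ pᵢ(∂). Then for every i and every multi-index α ∈ ℕⁿ and variable index j, the functional Γ = 𝟙_{ζᵢ} ∘ (∂^α pᵢ)(∂) ∈ A_Λ* satisfies M_{xⱼ}^t(Γ) = 𝟙_{ζᵢ} ∘ (∂ⱼ∂^α pᵢ)(∂) + (ζᵢ)ⱼ·Γ. Consequently (M_{xⱼ}^t − (ζᵢ)ⱼ)ⁿ(Γ) = 𝟙_{ζᵢ} ∘ (∂ⱼⁿ ∂^α pᵢ)(∂) for all n ≥ 0, so Γ is either zero or a generalized eigenvector of each M_{xⱼ}^t with eigenvalue (ζᵢ)ⱼ and rank deg_{xⱼ}(∂^α pᵢ)+1. -/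

import Mathlib

open MvPolynomial

noncomputable section

variable {k : Type*}

def hankelKer [Field k] {n : ℕ} (Λ : Module.Dual k (MvPolynomial (Fin n) k)) :
    Ideal (MvPolynomial (Fin n) k) where
  carrier := {f | ∀ g, Λ (f * g) = 0}
  zero_mem' := by intro g; simp
  add_mem' := by
    intro a b ha hb g
    rw [add_mul, map_add, ha g, hb g, add_zero]
  smul_mem' := by
    intro c f hf g
    simp only [smul_eq_mul, Set.mem_setOf_eq] at *
    rw [mul_comm c f, mul_assoc]
    exact hf _

def evalDual [CommSemiring k] {n : ℕ} (ζ : Fin n → k) :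
    Module.Dual k (MvPolynomial (Fin n) k) := (aeval ζ).toLinearMap

def Mt [CommSemiring k] {n : ℕ} (a : MvPolynomial (Fin n) k) :
    Module.End k (Module.Dual k (MvPolynomial (Fin n) k)) :=
  LinearMap.lcomp k k (LinearMap.mulLeft k a)

/-- The differential operator `∂^α`. -/
def pderivPow [CommRing k] {n : ℕ} (α : Fin n →₀ ℕ) :
    Module.End k (MvPolynomial (Fin n) k) :=
  (List.ofFn fun i : Fin n => ((pderiv i).toLinearMap) ^ (α i)).prod

/-- The differential operator `p(∂)` associated to a polynomial `p`. -/
def diffOp [CommRing k] {n : ℕ} (p : MvPolynomial (Fin n) k) :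
    Module.End k (MvPolynomial (Fin n) k) :=
  ∑ α ∈ p.support, p.coeff α • pderivPow α


lemma my_pderiv_comm [CommRing k] {n : ℕ} (i j : Fin n) (f : MvPolynomial (Fin n) k) :
    pderiv i (pderiv j f) = pderiv j (pderiv i f) := by
  induction f using MvPolynomial.induction_on' with
  | monomial s a =>
    rcases eq_or_ne i j with rfl | hij
    · rfl
    · simp only [pderiv_monomial]
      rw [tsub_right_comm]
      congr 1
      rw [Finsupp.tsub_apply, Finsupp.tsub_apply, Finsupp.single_eq_of_ne' hij,
        Finsupp.single_eq_of_ne' (Ne.symm hij), tsub_zero, tsub_zero]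
      ring
  | add p q hp hq => simp [hp, hq]

lemma commute_pderiv [CommRing k] {n : ℕ} (i j : Fin n) :
    Commute ((pderiv i).toLinearMap : Module.End k (MvPolynomial (Fin n) k))
      (pderiv j).toLinearMap :=
  LinearMap.ext fun f => my_pderiv_comm i j f

lemma pderivPow_zero [CommRing k] {n : ℕ} :
    pderivPow (0 : Fin n →₀ ℕ) = (1 : Module.End k (MvPolynomial (Fin n) k)) := by
  unfold pderivPow
  refine List.prod_eq_one fun x hx => ?_
  rw [List.mem_ofFn] at hx
  obtain ⟨i, rfl⟩ := hx
  simp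

-- helper : product of updated list
lemma ofFn_update_prod {M : Type*} [Monoid M] :
    ∀ {n : ℕ} (g : Fin n → M) (i : Fin n) (c : M), (∀ i', Commute c (g i')) →
    (List.ofFn (Function.update g i (c * g i))).prod = c * (List.ofFn g).prod := by
  intro n
  induction n with
  | zero => exact fun g i => i.elim0
  | succ m ih =>
    intro g i c hc
    induction i using Fin.cases with
    | zero =>
      have htail : (fun j : Fin m => Function.update g 0 (c * g 0) j.succ)
          = fun j => g j.succ :=
        funext fun j => Function.update_of_ne (Fin.succ_ne_zero j) _ g
      rw [List.ofFn_succ, List.ofFn_succ, List.prod_cons, List.prod_cons,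
        Function.update_self, htail, mul_assoc]
    | succ i' =>
      rw [List.ofFn_succ, List.ofFn_succ, List.prod_cons, List.prod_cons,
        Function.update_of_ne (Fin.succ_ne_zero i').symm]
      have : (fun j : Fin m => Function.update g i'.succ (c * g i'.succ) j.succ)
          = Function.update (fun j : Fin m => g j.succ) i' (c * g i'.succ) := by
        funext j
        rcases eq_or_ne j i' with rfl | hj
        · simp
        · rw [Function.update_of_ne (fun h => hj (Fin.succ_injective _ h)),
            Function.update_of_ne hj]
      rw [this, ih _ i' c (fun j => hc j.succ), ← mul_assoc, ← mul_assoc, (hc 0).eq]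

lemma pderivPow_add_single [CommRing k] {n : ℕ} (α : Fin n →₀ ℕ) (i : Fin n) :
    pderivPow (α + Finsupp.single i 1) =
      ((pderiv i).toLinearMap : Module.End k (MvPolynomial (Fin n) k)) * pderivPow α := by
  unfold pderivPow
  have h1 : (fun i' : Fin n => ((pderiv i').toLinearMap : Module.End k (MvPolynomial (Fin n) k))
        ^ (((α + Finsupp.single i 1) : Fin n →₀ ℕ) i'))
      = Function.update (fun i' : Fin n => ((pderiv i').toLinearMap :
          Module.End k (MvPolynomial (Fin n) k)) ^ (α i')) i
        ((pderiv i).toLinearMap * (pderiv i).toLinearMap ^ (α i)) := by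
    funext i'
    rcases eq_or_ne i' i with rfl | hi
    · rw [Function.update_self, Finsupp.add_apply, Finsupp.single_eq_same, pow_succ']
    · rw [Function.update_of_ne hi, Finsupp.add_apply,
        Finsupp.single_eq_of_ne' (Ne.symm hi), add_zero]
  rw [h1]
  exact ofFn_update_prod _ i _ (fun i' => (commute_pderiv i i').pow_right _)

lemma pderivPow_single_add [CommRing k] {n : ℕ} (a : Fin n) (b : ℕ) (f : Fin n →₀ ℕ) :
    pderivPow (Finsupp.single a b + f) =
      ((pderiv a).toLinearMap : Module.End k (MvPolynomial (Fin n) k)) ^ b * pderivPow f := by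
  induction b with
  | zero => simp
  | succ b ih =>
    have : Finsupp.single a (b + 1) + f = (Finsupp.single a b + f) + Finsupp.single a 1 := by
      rw [add_right_comm, ← Finsupp.single_add]
    rw [this, pderivPow_add_single, ih, pow_succ', mul_assoc]

-- Lemma P
lemma pow_pderiv_X_mul_self [CommRing k] {n : ℕ} (j : Fin n) :
    ∀ (b : ℕ) (f : MvPolynomial (Fin n) k),
    (((pderiv j).toLinearMap : Module.End k (MvPolynomial (Fin n) k)) ^ (b + 1)) (X j * f) =
      X j * (((pderiv j).toLinearMap) ^ (b + 1)) f + (b + 1) • (((pderiv j).toLinearMap) ^ b) f := by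
  intro b
  induction b with
  | zero =>
    intro f
    simp [pderiv_mul, add_comm]
  | succ b ih =>
    intro f
    rw [pow_succ, Module.End.mul_apply]
    have h1 : ((pderiv j).toLinearMap : Module.End k (MvPolynomial (Fin n) k)) (X j * f)
        = f + X j * pderiv j f := by
      show pderiv j (X j * f) = _
      rw [pderiv_mul, pderiv_X_self, one_mul]
    rw [h1, map_add, ih (pderiv j f)]
    have h4 : ((pderiv j).toLinearMap : Module.End k (MvPolynomial (Fin n) k)) f
        = pderiv j f := rfl
    rw [← h4, ← Module.End.mul_apply, ← Module.End.mul_apply, ← pow_succ, ← pow_succ,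
      succ_nsmul (((pderiv j).toLinearMap ^ (b + 1)) f) (b + 1)]
    abel

-- Lemma Q
lemma pow_pderiv_X_mul_ne [CommRing k] {n : ℕ} {a j : Fin n} (h : a ≠ j) (b : ℕ)
    (f : MvPolynomial (Fin n) k) :
    (((pderiv a).toLinearMap : Module.End k (MvPolynomial (Fin n) k)) ^ b) (X j * f) =
      X j * (((pderiv a).toLinearMap) ^ b) f := by
  induction b generalizing f with
  | zero => simp
  | succ b ih =>
    rw [pow_succ', Module.End.mul_apply, ih, Module.End.mul_apply]
    show pderiv a (X j * _) = _
    rw [pderiv_mul, pderiv_X_of_ne (Ne.symm h), zero_mul, zero_add]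
    rfl

lemma pderivPow_X_mul [CommRing k] {n : ℕ} (α : Fin n →₀ ℕ) (j : Fin n)
    (f : MvPolynomial (Fin n) k) :
    pderivPow α (X j * f) = X j * pderivPow α f +
      (α j) • pderivPow (α - Finsupp.single j 1) f := by
  induction α using Finsupp.induction generalizing f with
  | zero => simp [pderivPow_zero]
  | single_add a b f₀ hat hb ih =>
    rw [pderivPow_single_add, Module.End.mul_apply, ih, map_add]
    rcases eq_or_ne a j with rfl | haj
    · have hf0 : f₀ a = 0 := Finsupp.notMem_support_iff.mp hat
      obtain ⟨b', rfl⟩ := Nat.exists_eq_succ_of_ne_zero hb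
      rw [hf0, zero_smul, map_zero, add_zero, pow_pderiv_X_mul_self]
      have hsub : Finsupp.single a (b' + 1) + f₀ - Finsupp.single a 1
          = Finsupp.single a b' + f₀ := by
        ext x
        rcases eq_or_ne x a with rfl | hx
        · simp [hf0]
        · simp [Finsupp.single_eq_of_ne' (Ne.symm hx)]
      rw [hsub, pderivPow_single_add]
      simp [Finsupp.add_apply, hf0, Module.End.mul_apply]
    · rw [map_nsmul, pow_pderiv_X_mul_ne haj]
      have hsub : Finsupp.single a b + f₀ - Finsupp.single j 1
          = Finsupp.single a b + (f₀ - Finsupp.single j 1) := by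
        ext x
        rcases eq_or_ne x a with rfl | hx
        · simp [Finsupp.single_eq_of_ne' (Ne.symm haj), Finsupp.single_eq_of_ne' haj]
        · simp [Finsupp.single_eq_of_ne' (Ne.symm hx)]
      rw [hsub, pderivPow_single_add]
      simp [Finsupp.add_apply, Finsupp.single_eq_of_ne' haj, Module.End.mul_apply]

lemma diffOp_monomial [CommRing k] {n : ℕ} (β : Fin n →₀ ℕ) (c : k) :
    diffOp (monomial β c) = c • pderivPow β := by
  classical
  unfold diffOp
  rcases eq_or_ne c 0 with rfl | hc
  · simp
  · rw [support_monomial, if_neg hc, Finset.sum_singleton, coeff_monomial, if_pos rfl]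

lemma diffOp_sum_def [CommRing k] {n : ℕ} (p : MvPolynomial (Fin n) k) :
    diffOp p = Finsupp.sum (AddMonoidAlgebra.coeff p) (fun α c => c • pderivPow α) := rfl

lemma diffOp_add [CommRing k] {n : ℕ} (p q : MvPolynomial (Fin n) k) :
    diffOp (p + q) = diffOp p + diffOp q := by
  rw [diffOp_sum_def, diffOp_sum_def, diffOp_sum_def]
  exact Finsupp.sum_add_index' (fun a => zero_smul _ _) (fun a b₁ b₂ => add_smul _ _ _)

lemma diffOp_zero [CommRing k] {n : ℕ} : diffOp (0 : MvPolynomial (Fin n) k) = 0 := by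
  simp [diffOp]

lemma diffOp_X_mul [CommRing k] {n : ℕ} (j : Fin n) (q f : MvPolynomial (Fin n) k) :
    diffOp q (X j * f) = X j * diffOp q f + diffOp (pderiv j q) f := by
  induction q using MvPolynomial.induction_on' with
  | monomial s c =>
    rw [pderiv_monomial, diffOp_monomial, diffOp_monomial, LinearMap.smul_apply,
      LinearMap.smul_apply, LinearMap.smul_apply, pderivPow_X_mul, smul_add,
      mul_smul_comm]
    congr 1
    rw [← Nat.cast_smul_eq_nsmul k (s j), smul_smul]
  | add p q hp hq =>
    rw [diffOp_add, map_add, LinearMap.add_apply, LinearMap.add_apply, hp, hq,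
      diffOp_add, LinearMap.add_apply]
    ring

lemma main_G [CommRing k] {n : ℕ} (ζ : Fin n → k) (j : Fin n)
    (q : MvPolynomial (Fin n) k) :
    (Mt (X j)) (evalDual ζ ∘ₗ diffOp q) =
      evalDual ζ ∘ₗ diffOp (pderiv j q) + ζ j • (evalDual ζ ∘ₗ diffOp q) := by
  refine LinearMap.ext fun f => ?_
  simp only [Mt, LinearMap.lcomp_apply, LinearMap.comp_apply, LinearMap.add_apply,
    LinearMap.smul_apply, LinearMap.mulLeft_apply]
  rw [diffOp_X_mul]
  simp only [evalDual, AlgHom.toLinearMap_apply, map_add, map_mul, aeval_X, smul_eq_mul]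
  ring

lemma pow_pderiv_monomial_eq_zero [CommRing k] {n : ℕ} (j : Fin n) :
    ∀ (m : ℕ) (s : Fin n →₀ ℕ) (c : k), s j < m →
      (((pderiv j).toLinearMap : Module.End k (MvPolynomial (Fin n) k)) ^ m) (monomial s c) = 0 := by
  intro m
  induction m with
  | zero => intro s c h; omega
  | succ m ih =>
    intro s c h
    rw [pow_succ, Module.End.mul_apply]
    have : ((pderiv j).toLinearMap : Module.End k (MvPolynomial (Fin n) k)) (monomial s c)
        = monomial (s - Finsupp.single j 1) (c * s j) := pderiv_monomial
    rw [this]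
    rcases Nat.eq_zero_or_pos (s j) with h0 | h0
    · rw [h0, Nat.cast_zero, mul_zero, map_zero, map_zero]
    · exact ih _ _ (by simp [Finsupp.tsub_apply]; omega)

lemma pow_pderiv_eq_zero [CommRing k] {n : ℕ} (j : Fin n) (q : MvPolynomial (Fin n) k)
    {m : ℕ} (h : q.degreeOf j < m) :
    (((pderiv j).toLinearMap : Module.End k (MvPolynomial (Fin n) k)) ^ m) q = 0 := by
  conv_lhs => rw [q.as_sum]
  rw [map_sum]
  refine Finset.sum_eq_zero fun s hs => ?_
  refine pow_pderiv_monomial_eq_zero j m s _ (lt_of_le_of_lt ?_ h)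
  rw [degreeOf_eq_sup]
  exact Finset.le_sup (f := fun m => m j) hs

theorem stmt14' [Field k] {n : ℕ}
    (ζ : Fin n → k) :
    ∀ (q : MvPolynomial (Fin n) k) (j : Fin n),
      (Mt (X j)) (evalDual ζ ∘ₗ diffOp q) =
          evalDual ζ ∘ₗ diffOp (pderiv j q) +
            ζ j • (evalDual ζ ∘ₗ diffOp q) ∧
      (∀ m : ℕ,
        (((Mt (X j) - ζ j • 1 : Module.End k (Module.Dual k (MvPolynomial (Fin n) k)))) ^ m)
            (evalDual ζ ∘ₗ diffOp q) =
          evalDual ζ ∘ₗ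
            diffOp ((((pderiv j).toLinearMap : Module.End k (MvPolynomial (Fin n) k)) ^ m) q)) ∧
      (((Mt (X j) - ζ j • 1 : Module.End k (Module.Dual k (MvPolynomial (Fin n) k)))) ^ (q.degreeOf j + 1))
            (evalDual ζ ∘ₗ diffOp q) = 0 := by
  intro q j
  have part2 : ∀ m : ℕ,
      (((Mt (X j) - ζ j • 1 : Module.End k (Module.Dual k (MvPolynomial (Fin n) k)))) ^ m)
          (evalDual ζ ∘ₗ diffOp q) =
        evalDual ζ ∘ₗ
          diffOp ((((pderiv j).toLinearMap : Module.End k (MvPolynomial (Fin n) k)) ^ m) q) := by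
    intro m
    induction m with
    | zero => simp
    | succ m ih =>
      rw [pow_succ', Module.End.mul_apply, ih, LinearMap.sub_apply, LinearMap.smul_apply,
        Module.End.one_apply, main_G, pow_succ', Module.End.mul_apply]
      have : ((pderiv j).toLinearMap : Module.End k (MvPolynomial (Fin n) k))
          ((((pderiv j).toLinearMap) ^ m) q) = pderiv j ((((pderiv j).toLinearMap) ^ m) q) := rfl
      rw [this]
      abel
  refine ⟨main_G ζ j q, part2, ?_⟩
  rw [part2 (q.degreeOf j + 1), pow_pderiv_eq_zero j q (Nat.lt_succ_self _), diffOp_zero,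
    LinearMap.comp_zero]

theorem stmt14 [Field k] [IsAlgClosed k] [CharZero k] {n d : ℕ}
    (Λ : Module.Dual k (MvPolynomial (Fin n) k))
    (hfin : FiniteDimensional k (MvPolynomial (Fin n) k ⧸ hankelKer Λ))
    (ζ : Fin d → (Fin n → k)) (p : Fin d → MvPolynomial (Fin n) k)
    (hζ : Function.Injective ζ)
    (hΛ : Λ = ∑ i, evalDual (ζ i) ∘ₗ diffOp (p i)) :
    ∀ (i : Fin d) (α : Fin n →₀ ℕ) (j : Fin n),
      (Mt (X j)) (evalDual (ζ i) ∘ₗ diffOp (pderivPow α (p i))) =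
          evalDual (ζ i) ∘ₗ diffOp (pderiv j (pderivPow α (p i))) +
            ζ i j • (evalDual (ζ i) ∘ₗ diffOp (pderivPow α (p i))) ∧
      (∀ m : ℕ,
        (((Mt (X j) - ζ i j • 1 : Module.End k (Module.Dual k (MvPolynomial (Fin n) k)))) ^ m)
            (evalDual (ζ i) ∘ₗ diffOp (pderivPow α (p i))) =
          evalDual (ζ i) ∘ₗ
            diffOp ((((pderiv j).toLinearMap : Module.End k (MvPolynomial (Fin n) k)) ^ m)
              (pderivPow α (p i)))) ∧
      (((Mt (X j) - ζ i j • 1 : Module.End k (Module.Dual k (MvPolynomial (Fin n) k)))) ^ ((pderivPow α (p i)).degreeOf j + 1))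
            (evalDual (ζ i) ∘ₗ diffOp (pderivPow α (p i))) = 0 := by
  intro i α j
  exact stmt14' (ζ i) (pderivPow α (p i)) j

end
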